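/- arXiv:1311.5905 — 2 statements merged into one kernel-verified Lean document; each statement's English description precedes it below -/
import Mathlib

section
/- Let 0 < β ≤ 1/2 and n ≥ 1. Fix a unit vector x' ∈ ℝⁿ. Then the function g₁(z) = ∫₀^1 t^{1+2β} (|z|²+t²)^{-(n+2+β)/2} |x'-z| (|x'-z|²+t²)^{-(n+2+β)/2} dt is integrable over ℝⁿ. -/
open Real MeasureTheory Set Metric

section AuxStmt13

lemma aux_ball {n : ℕ} {c : ℝ} (hc0 : 0 < c) (hc : c < n) :
    IntegrableOn (fun z : EuclideanSpace ℝ (Fin n) => ‖z‖ ^ (-c))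
      (Metric.ball 0 1) := by
  have hmeas : Measurable (fun z : EuclideanSpace ℝ (Fin n) => ‖z‖ ^ (-c)) := by fun_prop
  refine ⟨hmeas.aestronglyMeasurable, ?_⟩
  have hnn : ∀ z : EuclideanSpace ℝ (Fin n), 0 ≤ ‖z‖ ^ (-c) := fun z => rpow_nonneg (norm_nonneg z) _
  rw [hasFiniteIntegral_iff_ofReal (ae_of_all _ hnn)]
  set μ := (volume : Measure (EuclideanSpace ℝ (Fin n))).restrict (Metric.ball 0 1)
  rw [lintegral_eq_lintegral_meas_le μ (ae_of_all _ hnn) (by fun_prop)]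
  have key : ∀ t ∈ Ioi (1:ℝ), μ {z : EuclideanSpace ℝ (Fin n) | t ≤ ‖z‖ ^ (-c)}
      ≤ ENNReal.ofReal (t ^ (-((n:ℝ)/c))) * volume (Metric.ball (0 : EuclideanSpace ℝ (Fin n)) 1) := by
    intro t ht
    have ht0 : (0:ℝ) < t := lt_trans one_pos ht
    have hsub : {z : EuclideanSpace ℝ (Fin n) | t ≤ ‖z‖ ^ (-c)}
        ⊆ Metric.closedBall 0 (t ^ (-c⁻¹)) := by
      intro z hz
      simp only [mem_setOf_eq] at hz
      rcases eq_or_ne z 0 with rfl | hz0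
      · simp only [norm_zero, Real.zero_rpow (neg_ne_zero.mpr hc0.ne')] at hz
        linarith
      · have hzn : 0 < ‖z‖ := norm_pos_iff.mpr hz0
        rw [mem_closedBall_zero_iff]
        calc ‖z‖ = (‖z‖ ^ (-c)) ^ (-c⁻¹) := by
              rw [← Real.rpow_mul hzn.le]
              rw [neg_mul_neg, mul_inv_cancel₀ hc0.ne', Real.rpow_one]
          _ ≤ t ^ (-c⁻¹) := Real.rpow_le_rpow_of_nonpos ht0 hz (neg_nonpos.mpr (inv_nonneg.mpr hc0.le))
    calc μ {z : EuclideanSpace ℝ (Fin n) | t ≤ ‖z‖ ^ (-c)}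
        ≤ volume (Metric.closedBall (0 : EuclideanSpace ℝ (Fin n)) (t ^ (-c⁻¹))) :=
          le_trans (Measure.restrict_le_self _) (measure_mono hsub)
      _ = ENNReal.ofReal ((t ^ (-c⁻¹)) ^ (Module.finrank ℝ (EuclideanSpace ℝ (Fin n)))) *
            volume (Metric.ball (0 : EuclideanSpace ℝ (Fin n)) 1) :=
          Measure.addHaar_closedBall _ _ (by positivity)
      _ = ENNReal.ofReal (t ^ (-((n:ℝ)/c))) * volume (Metric.ball (0 : EuclideanSpace ℝ (Fin n)) 1) := by
          congr 2
          rw [finrank_euclideanSpace_fin, ← Real.rpow_natCast (t ^ (-c⁻¹)) n,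
            ← Real.rpow_mul ht0.le]
          ring_nf
  calc ∫⁻ t in Ioi (0:ℝ), μ {z | t ≤ ‖z‖ ^ (-c)}
      ≤ ∫⁻ t in Ioc (0:ℝ) 1 ∪ Ioi 1, μ {z | t ≤ ‖z‖ ^ (-c)} :=
        lintegral_mono_set Ioi_subset_Ioc_union_Ioi
    _ ≤ (∫⁻ t in Ioc (0:ℝ) 1, μ {z | t ≤ ‖z‖ ^ (-c)}) + ∫⁻ t in Ioi (1:ℝ), μ {z | t ≤ ‖z‖ ^ (-c)} :=
        lintegral_union_le _ _ _
    _ < ⊤ := by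
        refine ENNReal.add_lt_top.2 ⟨?_, ?_⟩
        · calc (∫⁻ t in Ioc (0:ℝ) 1, μ {z | t ≤ ‖z‖ ^ (-c)})
              ≤ ∫⁻ _ in Ioc (0:ℝ) 1, volume (Metric.ball (0 : EuclideanSpace ℝ (Fin n)) 1) := by
                refine lintegral_mono fun t => ?_
                exact le_trans (measure_mono (subset_univ _))
                  (le_of_eq (Measure.restrict_apply_univ _))
            _ < ⊤ := by
                rw [setLIntegral_const]
                exact ENNReal.mul_lt_top measure_ball_lt_top (by simp)
        · calc (∫⁻ t in Ioi (1:ℝ), μ {z | t ≤ ‖z‖ ^ (-c)})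
              ≤ ∫⁻ t in Ioi (1:ℝ), ENNReal.ofReal (t ^ (-((n:ℝ)/c))) *
                  volume (Metric.ball (0 : EuclideanSpace ℝ (Fin n)) 1) :=
                setLIntegral_mono' measurableSet_Ioi key
            _ = (∫⁻ t in Ioi (1:ℝ), ENNReal.ofReal (t ^ (-((n:ℝ)/c)))) *
                  volume (Metric.ball (0 : EuclideanSpace ℝ (Fin n)) 1) :=
                lintegral_mul_const' _ _ measure_ball_lt_top.ne
            _ < ⊤ := by
                refine ENNReal.mul_lt_top ?_ measure_ball_lt_top
                refine IntegrableOn.setLIntegral_lt_top ?_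
                refine integrableOn_Ioi_rpow_of_lt ?_ one_pos
                rw [neg_lt_neg_iff]
                rw [lt_div_iff₀ hc0, one_mul]
                exact hc


lemma aux_kernel {n : ℕ} {c d : ℝ} (hc : c < n) (hd : (n:ℝ) < d) (hcd : (n:ℝ) < c + d) :
    Integrable (fun z : EuclideanSpace ℝ (Fin n) => ‖z‖ ^ (-c) * (1 + ‖z‖) ^ (-d)) := by
  have hd0 : 0 < d := lt_of_le_of_lt (Nat.cast_nonneg n) hd
  have hfrk : (Module.finrank ℝ (EuclideanSpace ℝ (Fin n)) : ℝ) = (n:ℝ) := by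
    rw [finrank_euclideanSpace_fin]
  have hmeas : AEStronglyMeasurable
      (fun z : EuclideanSpace ℝ (Fin n) => ‖z‖ ^ (-c) * (1 + ‖z‖) ^ (-d)) volume := by
    apply Measurable.aestronglyMeasurable; fun_prop
  have hnn : ∀ z : EuclideanSpace ℝ (Fin n), 0 ≤ ‖z‖ ^ (-c) * (1 + ‖z‖) ^ (-d) := by
    intro z
    exact mul_nonneg (rpow_nonneg (norm_nonneg z) _) (rpow_nonneg (by positivity) _)
  rcases le_or_gt c 0 with hc0 | hc0
  · have hint : Integrable (fun z : EuclideanSpace ℝ (Fin n) => (1 + ‖z‖) ^ (-(c + d))) volume := by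
      apply integrable_one_add_norm
      rwa [hfrk]
    refine hint.mono' hmeas (ae_of_all _ fun z => ?_)
    rw [Real.norm_of_nonneg (hnn z)]
    calc ‖z‖ ^ (-c) * (1 + ‖z‖) ^ (-d)
        ≤ (1 + ‖z‖) ^ (-c) * (1 + ‖z‖) ^ (-d) :=
          mul_le_mul_of_nonneg_right
            (Real.rpow_le_rpow (norm_nonneg z) (by linarith [norm_nonneg z]) (by linarith))
            (rpow_nonneg (by positivity) _)
      _ = (1 + ‖z‖) ^ (-(c + d)) := by
          rw [← Real.rpow_add (by positivity : (0:ℝ) < 1 + ‖z‖)]; ring_nf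
  · rw [← integrableOn_univ, ← union_compl_self (Metric.ball (0 : EuclideanSpace ℝ (Fin n)) 1)]
    apply IntegrableOn.union
    · refine (aux_ball hc0 hc).mono' hmeas.restrict (ae_of_all _ fun z => ?_)
      rw [Real.norm_of_nonneg (hnn z)]
      calc ‖z‖ ^ (-c) * (1 + ‖z‖) ^ (-d)
          ≤ ‖z‖ ^ (-c) * 1 :=
            mul_le_mul_of_nonneg_left
              (Real.rpow_le_one_of_one_le_of_nonpos (by linarith [norm_nonneg z]) (by linarith))
              (rpow_nonneg (norm_nonneg z) _)
        _ = ‖z‖ ^ (-c) := mul_one _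
    · have hint : Integrable (fun z : EuclideanSpace ℝ (Fin n) => (1 + ‖z‖) ^ (-d)) volume := by
        apply integrable_one_add_norm
        rwa [hfrk]
      refine (hint.integrableOn).mono' hmeas.restrict ?_
      filter_upwards [ae_restrict_mem measurableSet_ball.compl] with z hz
      rw [Real.norm_of_nonneg (hnn z)]
      have hz1 : 1 ≤ ‖z‖ := by
        simpa [mem_ball_zero_iff] using hz
      calc ‖z‖ ^ (-c) * (1 + ‖z‖) ^ (-d)
          ≤ 1 * (1 + ‖z‖) ^ (-d) :=
            mul_le_mul_of_nonneg_right
              (Real.rpow_le_one_of_one_le_of_nonpos hz1 (by linarith))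
              (rpow_nonneg (by positivity) _)
        _ = (1 + ‖z‖) ^ (-d) := one_mul _

lemma rpow_sum_bound {x t s r : ℝ} (hx : 0 < x) (ht : 0 < t) (hs : 0 ≤ s) (hr : 0 ≤ r) :
    (x ^ 2 + t ^ 2) ^ (-(s + r) / 2) ≤ x ^ (-s) * t ^ (-r) := by
  have hxt : (0:ℝ) < x ^ 2 + t ^ 2 := by positivity
  have h1 : (x ^ 2 + t ^ 2) ^ (-(s + r) / 2)
      = (x ^ 2 + t ^ 2) ^ (-s / 2) * (x ^ 2 + t ^ 2) ^ (-r / 2) := by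
    rw [← Real.rpow_add hxt]; ring_nf
  have h2 : (x ^ 2 + t ^ 2) ^ (-s / 2) ≤ x ^ (-s) := by
    calc (x ^ 2 + t ^ 2) ^ (-s / 2) ≤ (x ^ 2) ^ (-s / 2) :=
        Real.rpow_le_rpow_of_nonpos (by positivity) (by nlinarith) (by linarith)
      _ = x ^ (-s) := by
        rw [← Real.rpow_natCast x 2, ← Real.rpow_mul hx.le,
          show ((2:ℕ):ℝ) * (-s / 2) = -s by push_cast; ring]
  have h3 : (x ^ 2 + t ^ 2) ^ (-r / 2) ≤ t ^ (-r) := by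
    calc (x ^ 2 + t ^ 2) ^ (-r / 2) ≤ (t ^ 2) ^ (-r / 2) :=
        Real.rpow_le_rpow_of_nonpos (by positivity) (by nlinarith) (by linarith)
      _ = t ^ (-r) := by
        rw [← Real.rpow_natCast t 2, ← Real.rpow_mul ht.le,
          show ((2:ℕ):ℝ) * (-r / 2) = -r by push_cast; ring]
  rw [h1]
  exact mul_le_mul h2 h3 (rpow_nonneg hxt.le _) (rpow_nonneg hx.le _)

lemma quarter_bound {u v s m : ℝ} (hu : 0 ≤ u) (hv : (1 + u) / 4 ≤ v) (hs : 0 ≤ s)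
    (hsm : s ≤ m) : v ^ (-s) ≤ 4 ^ m * (1 + u) ^ (-s) := by
  have h4 : (0:ℝ) < (1 + u) / 4 := by positivity
  calc v ^ (-s) ≤ ((1 + u) / 4) ^ (-s) :=
      Real.rpow_le_rpow_of_nonpos h4 hv (by linarith)
    _ = (1 + u) ^ (-s) * 4 ^ s := by
      rw [Real.div_rpow (by positivity) (by norm_num : (0:ℝ) ≤ 4), div_eq_mul_inv,
        ← Real.rpow_neg (by norm_num : (0:ℝ) ≤ 4), neg_neg]
    _ ≤ (1 + u) ^ (-s) * 4 ^ m :=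
      mul_le_mul_of_nonneg_left
        (Real.rpow_le_rpow_of_exponent_le (by norm_num) hsm)
        (rpow_nonneg (by positivity) _)
    _ = 4 ^ m * (1 + u) ^ (-s) := mul_comm _ _


lemma inner_bound {n : ℕ} {β a b t : ℝ} (hn : 1 ≤ n) (hβ0 : 0 < β) (hβ : β ≤ 1 / 2)
    (ha : 0 < a) (hb2 : 1 / 2 ≤ b) (hab : a ≤ b) (ht0 : 0 < t) :
    t ^ (1 + 2 * β) * (a ^ 2 + t ^ 2) ^ (-((n : ℝ) + 2 + β) / 2) * b *
      (b ^ 2 + t ^ 2) ^ (-((n : ℝ) + 2 + β) / 2)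
    ≤ (4 : ℝ) ^ ((n : ℝ) + 3) * (a ^ (-((n : ℝ) - β / 2)) * (1 + a) ^ (-((n : ℝ) + 1 + β)))
      * t ^ (β / 2 - 1) := by
  have hb : 0 < b := by linarith
  have hn1 : (1:ℝ) ≤ (n:ℝ) := by exact_mod_cast hn
  have e1 : (a ^ 2 + t ^ 2) ^ (-((n : ℝ) + 2 + β) / 2)
      ≤ a ^ (-((n:ℝ) - β / 2)) * t ^ (-(2 + 3 * β / 2)) := by
    have := rpow_sum_bound (x := a) (t := t) (s := (n:ℝ) - β / 2) (r := 2 + 3 * β / 2)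
      ha ht0 (by linarith) (by linarith)
    rwa [show -(((n:ℝ) - β / 2) + (2 + 3 * β / 2)) / 2 = -((n : ℝ) + 2 + β) / 2 by ring] at this
  have e2 : (b ^ 2 + t ^ 2) ^ (-((n : ℝ) + 2 + β) / 2) ≤ b ^ (-((n:ℝ) + 2 + β)) := by
    have := rpow_sum_bound (x := b) (t := t) (s := (n:ℝ) + 2 + β) (r := 0)
      hb ht0 (by linarith) le_rfl
    simpa using this
  have e3 : b ^ (-((n:ℝ) + 1 + β)) ≤ 4 ^ ((n:ℝ) + 3) * (1 + a) ^ (-((n:ℝ) + 1 + β)) :=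
    quarter_bound ha.le (by linarith) (by linarith) (by linarith)
  calc t ^ (1 + 2 * β) * (a ^ 2 + t ^ 2) ^ (-((n : ℝ) + 2 + β) / 2) * b *
        (b ^ 2 + t ^ 2) ^ (-((n : ℝ) + 2 + β) / 2)
      ≤ t ^ (1 + 2 * β) * (a ^ (-((n:ℝ) - β / 2)) * t ^ (-(2 + 3 * β / 2))) * b *
        (b ^ (-((n:ℝ) + 2 + β))) := by
        have ht1 : 0 ≤ t ^ (1 + 2 * β) := rpow_nonneg ht0.le _
        have h1 : 0 ≤ (a ^ 2 + t ^ 2) ^ (-((n : ℝ) + 2 + β) / 2) := rpow_nonneg (by positivity) _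
        gcongr
      _ = (t ^ (1 + 2 * β) * t ^ (-(2 + 3 * β / 2))) * a ^ (-((n:ℝ) - β / 2)) *
          (b * b ^ (-((n:ℝ) + 2 + β))) := by ring
      _ = t ^ (β / 2 - 1) * a ^ (-((n:ℝ) - β / 2)) * b ^ (-((n:ℝ) + 1 + β)) := by
        have hbb : b * b ^ (-((n:ℝ) + 2 + β)) = b ^ (-((n:ℝ) + 1 + β)) := by
          rw [show -((n:ℝ) + 1 + β) = 1 + -((n:ℝ) + 2 + β) by ring, Real.rpow_add hb,
            Real.rpow_one]
        rw [← Real.rpow_add ht0, show (1 + 2 * β) + -(2 + 3 * β / 2) = β / 2 - 1 by ring, hbb]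
      _ ≤ t ^ (β / 2 - 1) * a ^ (-((n:ℝ) - β / 2)) *
          (4 ^ ((n:ℝ) + 3) * (1 + a) ^ (-((n:ℝ) + 1 + β))) := by
        have : 0 ≤ t ^ (β / 2 - 1) * a ^ (-((n:ℝ) - β / 2)) :=
          mul_nonneg (rpow_nonneg ht0.le _) (rpow_nonneg ha.le _)
        exact mul_le_mul_of_nonneg_left e3 this
      _ = (4 : ℝ) ^ ((n : ℝ) + 3) * (a ^ (-((n : ℝ) - β / 2)) * (1 + a) ^ (-((n : ℝ) + 1 + β)))
          * t ^ (β / 2 - 1) := by ring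

lemma inner_bound2 {n : ℕ} {β a b t : ℝ} (hn : 1 ≤ n) (hβ0 : 0 < β) (hβ : β ≤ 1 / 2)
    (hb : 0 < b) (ha2 : 1 / 2 ≤ a) (hab : b ≤ a) (ht0 : 0 < t) :
    t ^ (1 + 2 * β) * (a ^ 2 + t ^ 2) ^ (-((n : ℝ) + 2 + β) / 2) * b *
      (b ^ 2 + t ^ 2) ^ (-((n : ℝ) + 2 + β) / 2)
    ≤ (4 : ℝ) ^ ((n : ℝ) + 3) * (b ^ (-((n : ℝ) - 1 - β / 2)) * (1 + b) ^ (-((n : ℝ) + 2 + β)))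
      * t ^ (β / 2 - 1) := by
  have ha : 0 < a := by linarith
  have hn1 : (1:ℝ) ≤ (n:ℝ) := by exact_mod_cast hn
  have e1 : (a ^ 2 + t ^ 2) ^ (-((n : ℝ) + 2 + β) / 2) ≤ a ^ (-((n:ℝ) + 2 + β)) := by
    have := rpow_sum_bound (x := a) (t := t) (s := (n:ℝ) + 2 + β) (r := 0)
      ha ht0 (by linarith) le_rfl
    simpa using this
  have e1' : a ^ (-((n:ℝ) + 2 + β)) ≤ 4 ^ ((n:ℝ) + 3) * (1 + b) ^ (-((n:ℝ) + 2 + β)) :=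
    quarter_bound hb.le (by linarith) (by linarith) (by linarith)
  have e2 : (b ^ 2 + t ^ 2) ^ (-((n : ℝ) + 2 + β) / 2)
      ≤ b ^ (-((n:ℝ) - β / 2)) * t ^ (-(2 + 3 * β / 2)) := by
    have := rpow_sum_bound (x := b) (t := t) (s := (n:ℝ) - β / 2) (r := 2 + 3 * β / 2)
      hb ht0 (by linarith) (by linarith)
    rwa [show -(((n:ℝ) - β / 2) + (2 + 3 * β / 2)) / 2 = -((n : ℝ) + 2 + β) / 2 by ring] at this
  calc t ^ (1 + 2 * β) * (a ^ 2 + t ^ 2) ^ (-((n : ℝ) + 2 + β) / 2) * b *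
        (b ^ 2 + t ^ 2) ^ (-((n : ℝ) + 2 + β) / 2)
      ≤ t ^ (1 + 2 * β) * (a ^ (-((n:ℝ) + 2 + β))) * b *
        (b ^ (-((n:ℝ) - β / 2)) * t ^ (-(2 + 3 * β / 2))) := by
        have ht1 : 0 ≤ t ^ (1 + 2 * β) := rpow_nonneg ht0.le _
        have h1 : 0 ≤ (a ^ 2 + t ^ 2) ^ (-((n : ℝ) + 2 + β) / 2) := rpow_nonneg (by positivity) _
        gcongr
      _ = (t ^ (1 + 2 * β) * t ^ (-(2 + 3 * β / 2))) * a ^ (-((n:ℝ) + 2 + β)) *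
          (b * b ^ (-((n:ℝ) - β / 2))) := by ring
      _ = t ^ (β / 2 - 1) * a ^ (-((n:ℝ) + 2 + β)) * b ^ (-((n:ℝ) - 1 - β / 2)) := by
        have hbb : b * b ^ (-((n:ℝ) - β / 2)) = b ^ (-((n:ℝ) - 1 - β / 2)) := by
          rw [show -((n:ℝ) - 1 - β / 2) = 1 + -((n:ℝ) - β / 2) by ring, Real.rpow_add hb,
            Real.rpow_one]
        rw [← Real.rpow_add ht0, show (1 + 2 * β) + -(2 + 3 * β / 2) = β / 2 - 1 by ring, hbb]
      _ ≤ t ^ (β / 2 - 1) * (4 ^ ((n:ℝ) + 3) * (1 + b) ^ (-((n:ℝ) + 2 + β))) *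
          b ^ (-((n:ℝ) - 1 - β / 2)) := by
        have h1 : 0 ≤ t ^ (β / 2 - 1) := rpow_nonneg ht0.le _
        have h2 : 0 ≤ b ^ (-((n:ℝ) - 1 - β / 2)) := rpow_nonneg hb.le _
        exact mul_le_mul_of_nonneg_right (mul_le_mul_of_nonneg_left e1' h1) h2
      _ = (4 : ℝ) ^ ((n : ℝ) + 3) * (b ^ (-((n : ℝ) - 1 - β / 2)) * (1 + b) ^ (-((n : ℝ) + 2 + β)))
          * t ^ (β / 2 - 1) := by ring


theorem stmt_13 (n : ℕ) (hn : 1 ≤ n) (β : ℝ) (hβ0 : 0 < β) (hβ : β ≤ 1 / 2)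
    (x' : EuclideanSpace ℝ (Fin n)) (hx' : ‖x'‖ = 1) :
    Integrable (fun z : EuclideanSpace ℝ (Fin n) =>
      ∫ t in Set.Ioo (0 : ℝ) 1,
        t ^ (1 + 2 * β) * (‖z‖ ^ 2 + t ^ 2) ^ (-((n : ℝ) + 2 + β) / 2) *
          ‖x' - z‖ * (‖x' - z‖ ^ 2 + t ^ 2) ^ (-((n : ℝ) + 2 + β) / 2)) := by
  have hn1 : (1:ℝ) ≤ (n:ℝ) := by exact_mod_cast hn
  -- integrability of t ^ (β/2 - 1) on (0,1)
  have htK : IntegrableOn (fun t : ℝ => t ^ (β / 2 - 1)) (Set.Ioo 0 1) := by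
    have h := intervalIntegral.intervalIntegrable_rpow' (a := 0) (b := 1)
      (r := β / 2 - 1) (by linarith)
    rw [intervalIntegrable_iff_integrableOn_Ioo_of_le zero_le_one] at h
    exact h
  set K : ℝ := ∫ t in Set.Ioo (0:ℝ) 1, t ^ (β / 2 - 1) with hKdef
  have hK0 : 0 ≤ K :=
    setIntegral_nonneg measurableSet_Ioo fun t ht => rpow_nonneg ht.1.le _
  set C : ℝ := (4 : ℝ) ^ ((n : ℝ) + 3) * K with hCdef
  have hC0 : 0 ≤ C := mul_nonneg (rpow_nonneg (by norm_num) _) hK0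
  set fA : EuclideanSpace ℝ (Fin n) → ℝ :=
    fun z => ‖z‖ ^ (-((n:ℝ) - β / 2)) * (1 + ‖z‖) ^ (-((n:ℝ) + 1 + β)) with hfAdef
  set fB : EuclideanSpace ℝ (Fin n) → ℝ :=
    fun z => ‖x' - z‖ ^ (-((n:ℝ) - 1 - β / 2)) * (1 + ‖x' - z‖) ^ (-((n:ℝ) + 2 + β)) with hfBdef
  have hfA : Integrable fA := aux_kernel (by linarith) (by linarith) (by linarith)
  have hfB : Integrable fB := by
    have h0 : Integrable (fun z : EuclideanSpace ℝ (Fin n) =>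
        ‖z‖ ^ (-((n:ℝ) - 1 - β / 2)) * (1 + ‖z‖) ^ (-((n:ℝ) + 2 + β))) :=
      aux_kernel (by linarith) (by linarith) (by linarith)
    exact h0.comp_sub_left x'
  have hfA0 : ∀ z, 0 ≤ fA z := fun z =>
    mul_nonneg (rpow_nonneg (norm_nonneg _) _) (rpow_nonneg (by positivity) _)
  have hfB0 : ∀ z, 0 ≤ fB z := fun z =>
    mul_nonneg (rpow_nonneg (norm_nonneg _) _) (rpow_nonneg (by positivity) _)
  have hh : Integrable (fun z => C * (fA z + fB z)) := (hfA.add hfB).const_mul C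
  refine hh.mono' ?_ ?_
  · -- measurability
    have hF : StronglyMeasurable (fun q : (EuclideanSpace ℝ (Fin n)) × ℝ =>
        q.2 ^ (1 + 2 * β) * (‖q.1‖ ^ 2 + q.2 ^ 2) ^ (-((n : ℝ) + 2 + β) / 2) *
          ‖x' - q.1‖ * (‖x' - q.1‖ ^ 2 + q.2 ^ 2) ^ (-((n : ℝ) + 2 + β) / 2)) := by
      apply Measurable.stronglyMeasurable
      fun_prop
    exact hF.integral_prod_right'.aestronglyMeasurable
  · -- pointwise bound
    have hne : ∀ᵐ z : EuclideanSpace ℝ (Fin n) ∂volume, z ≠ 0 ∧ z ≠ x' := by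
      haveI : Nontrivial (EuclideanSpace ℝ (Fin n)) := by
        refine nontrivial_of_ne x' 0 ?_
        intro h; rw [h] at hx'; simp at hx'
      have e0 : {z : EuclideanSpace ℝ (Fin n) | ¬(z ≠ 0 ∧ z ≠ x')} = {0} ∪ {x'} := by
        ext z; simp [not_and_or, or_comm]; tauto
      rw [ae_iff, e0]
      exact measure_union_null (measure_singleton _) (measure_singleton _)
    filter_upwards [hne] with z hz
    obtain ⟨hz0, hzx⟩ := hz
    have ha0 : 0 < ‖z‖ := norm_pos_iff.mpr hz0
    have hb0 : 0 < ‖x' - z‖ := by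
      rw [norm_pos_iff]; exact sub_ne_zero_of_ne (Ne.symm hzx)
    have hsum : 1 ≤ ‖x' - z‖ + ‖z‖ := by
      have : ‖x'‖ ≤ ‖x' - z‖ + ‖z‖ := by
        simpa using norm_add_le (x' - z) z
      linarith [hx' ▸ this]
    have hg0 : 0 ≤ ∫ t in Set.Ioo (0 : ℝ) 1,
        t ^ (1 + 2 * β) * (‖z‖ ^ 2 + t ^ 2) ^ (-((n : ℝ) + 2 + β) / 2) *
          ‖x' - z‖ * (‖x' - z‖ ^ 2 + t ^ 2) ^ (-((n : ℝ) + 2 + β) / 2) := by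
      refine setIntegral_nonneg measurableSet_Ioo fun t ht => ?_
      exact mul_nonneg (mul_nonneg (mul_nonneg (rpow_nonneg ht.1.le _)
        (rpow_nonneg (by positivity) _)) (norm_nonneg _)) (rpow_nonneg (by positivity) _)
    rw [Real.norm_of_nonneg hg0]
    have hinner_nonneg : ∀ᵐ t ∂(volume.restrict (Set.Ioo (0:ℝ) 1)),
        0 ≤ t ^ (1 + 2 * β) * (‖z‖ ^ 2 + t ^ 2) ^ (-((n : ℝ) + 2 + β) / 2) *
          ‖x' - z‖ * (‖x' - z‖ ^ 2 + t ^ 2) ^ (-((n : ℝ) + 2 + β) / 2) := by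
      filter_upwards [ae_restrict_mem measurableSet_Ioo] with t ht
      exact mul_nonneg (mul_nonneg (mul_nonneg (rpow_nonneg ht.1.le _)
        (rpow_nonneg (by positivity) _)) (norm_nonneg _)) (rpow_nonneg (by positivity) _)
    rcases le_total ‖z‖ ‖x' - z‖ with hab | hab
    · -- case near 0 : use fA
      have hb2 : 1 / 2 ≤ ‖x' - z‖ := by linarith
      have key : (∫ t in Set.Ioo (0 : ℝ) 1,
          t ^ (1 + 2 * β) * (‖z‖ ^ 2 + t ^ 2) ^ (-((n : ℝ) + 2 + β) / 2) *
            ‖x' - z‖ * (‖x' - z‖ ^ 2 + t ^ 2) ^ (-((n : ℝ) + 2 + β) / 2))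
          ≤ ∫ t in Set.Ioo (0 : ℝ) 1, ((4 : ℝ) ^ ((n : ℝ) + 3) * fA z) * t ^ (β / 2 - 1) := by
        refine integral_mono_of_nonneg hinner_nonneg ((htK.const_mul _)) ?_
        filter_upwards [ae_restrict_mem measurableSet_Ioo] with t ht
        simpa [hfAdef, mul_assoc] using inner_bound hn hβ0 hβ ha0 hb2 hab ht.1
      rw [integral_const_mul _] at key
      calc (∫ t in Set.Ioo (0 : ℝ) 1,
            t ^ (1 + 2 * β) * (‖z‖ ^ 2 + t ^ 2) ^ (-((n : ℝ) + 2 + β) / 2) *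
              ‖x' - z‖ * (‖x' - z‖ ^ 2 + t ^ 2) ^ (-((n : ℝ) + 2 + β) / 2))
          ≤ (4 : ℝ) ^ ((n : ℝ) + 3) * fA z * K := key
        _ = C * fA z := by rw [hCdef]; ring
        _ ≤ C * (fA z + fB z) := by nlinarith [mul_nonneg hC0 (hfB0 z)]
    · -- case near x' : use fB
      have ha2 : 1 / 2 ≤ ‖z‖ := by linarith
      have key : (∫ t in Set.Ioo (0 : ℝ) 1,
          t ^ (1 + 2 * β) * (‖z‖ ^ 2 + t ^ 2) ^ (-((n : ℝ) + 2 + β) / 2) *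
            ‖x' - z‖ * (‖x' - z‖ ^ 2 + t ^ 2) ^ (-((n : ℝ) + 2 + β) / 2))
          ≤ ∫ t in Set.Ioo (0 : ℝ) 1, ((4 : ℝ) ^ ((n : ℝ) + 3) * fB z) * t ^ (β / 2 - 1) := by
        refine integral_mono_of_nonneg hinner_nonneg ((htK.const_mul _)) ?_
        filter_upwards [ae_restrict_mem measurableSet_Ioo] with t ht
        simpa [hfBdef, mul_assoc] using inner_bound2 hn hβ0 hβ hb0 ha2 hab ht.1
      rw [integral_const_mul _] at key
      calc (∫ t in Set.Ioo (0 : ℝ) 1,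
            t ^ (1 + 2 * β) * (‖z‖ ^ 2 + t ^ 2) ^ (-((n : ℝ) + 2 + β) / 2) *
              ‖x' - z‖ * (‖x' - z‖ ^ 2 + t ^ 2) ^ (-((n : ℝ) + 2 + β) / 2))
          ≤ (4 : ℝ) ^ ((n : ℝ) + 3) * fB z * K := key
        _ = C * fB z := by rw [hCdef]; ring
        _ ≤ C * (fA z + fB z) := by nlinarith [mul_nonneg hC0 (hfA0 z)]

end AuxStmt13
end

section
/- Let 0 < β and n ≥ 1. Fix a unit vector x' ∈ ℝⁿ. Then g₂(z) = ∫₁^∞ t^{1+2β} (|z|²+t²)^{-(n+2+β)/2} |x'-z| (|x'-z|²+t²)^{-(n+2+β)/2} dt defines a continuous function on ℝⁿ which is integrable over ℝⁿ. -/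
open Real MeasureTheory

-- auxiliary lemmas
-- pointwise bound 1: integrand ≤ c * t^(-(2n+3))
lemma aux_bound1 (n : ℕ) (β b c t : ℝ) (hβ : 0 < β) (hb : 0 ≤ b) (hc : 0 ≤ c) (ht : 1 ≤ t) :
    t ^ (1 + 2 * β) * (b ^ 2 + t ^ 2) ^ (-((n : ℝ) + 2 + β) / 2) * c *
      (c ^ 2 + t ^ 2) ^ (-((n : ℝ) + 2 + β) / 2) ≤ c * t ^ (-(2 * (n : ℝ) + 3)) := by
  have ht0 : (0:ℝ) < t := lt_of_lt_of_le one_pos ht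
  set p : ℝ := (n : ℝ) + 2 + β with hp
  have hp0 : (0:ℝ) < p := by positivity
  have ht2 : (t:ℝ) ^ 2 = t ^ ((2:ℕ):ℝ) := (Real.rpow_natCast t 2).symm
  have key : ∀ a : ℝ, 0 ≤ a → (a ^ 2 + t ^ 2) ^ (-p / 2) ≤ t ^ (-p) := by
    intro a ha
    have h1 : (a ^ 2 + t ^ 2) ^ (-p / 2) ≤ (t ^ 2) ^ (-p / 2) :=
      Real.rpow_le_rpow_of_nonpos (by positivity) (by nlinarith) (by linarith)
    calc (a ^ 2 + t ^ 2) ^ (-p / 2) ≤ (t ^ 2) ^ (-p / 2) := h1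
      _ = t ^ (-p) := by
          rw [ht2, ← Real.rpow_mul ht0.le]; norm_num; congr 1; ring
  calc t ^ (1 + 2 * β) * (b ^ 2 + t ^ 2) ^ (-p / 2) * c * (c ^ 2 + t ^ 2) ^ (-p / 2)
      ≤ t ^ (1 + 2 * β) * t ^ (-p) * c * t ^ (-p) := by
        gcongr
        · exact key b hb
        · exact key c hc
    _ = c * t ^ (1 + 2 * β + -p + -p) := by
        have e1 : t ^ (1 + 2 * β + -p + -p) = t ^ (1 + 2 * β) * t ^ (-p) * t ^ (-p) := by
          rw [← Real.rpow_add ht0, ← Real.rpow_add ht0]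
        rw [e1]; ring
    _ = c * t ^ (-(2 * (n : ℝ) + 3)) := by
        have he : 1 + 2 * β + -p + -p = -(2 * (n : ℝ) + 3) := by rw [hp]; ring
        rw [he]

-- pointwise bound 2: for ‖z‖ ≥ 1, integrand ≤ b^(-(n+1)) * t^(-(n+1))
lemma aux_bound2 (n : ℕ) (β b c t : ℝ) (hβ : 0 < β) (hb : 1 ≤ b) (hc : 0 ≤ c) (ht : 1 ≤ t) :
    t ^ (1 + 2 * β) * (b ^ 2 + t ^ 2) ^ (-((n : ℝ) + 2 + β) / 2) * c *
      (c ^ 2 + t ^ 2) ^ (-((n : ℝ) + 2 + β) / 2) ≤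
    b ^ (-((n : ℝ) + 1)) * t ^ (-((n : ℝ) + 1)) := by
  have ht0 : (0:ℝ) < t := lt_of_lt_of_le one_pos ht
  have hb0 : (0:ℝ) < b := lt_of_lt_of_le one_pos hb
  set p : ℝ := (n : ℝ) + 2 + β with hp
  have hp0 : (0:ℝ) < p := by positivity
  -- squares as rpow
  have sq_rpow : ∀ a : ℝ, 0 < a → ∀ e : ℝ, (a ^ 2) ^ e = a ^ (2 * e) := by
    intro a ha e
    rw [show (a:ℝ) ^ 2 = a ^ ((2:ℕ):ℝ) from (Real.rpow_natCast a 2).symm, ← Real.rpow_mul ha.le]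
    norm_num
  -- first factor: (b²+t²)^(-p/2) ≤ b^(-(n+1)) * t^(-(1+β))
  have h1 : (b ^ 2 + t ^ 2) ^ (-p / 2) ≤ b ^ (-((n : ℝ) + 1)) * t ^ (-(1 + β)) := by
    have hMpos : (0:ℝ) < b ^ ((n : ℝ) + 1) * t ^ (1 + β) := by positivity
    have hA : b ^ ((n : ℝ) + 1) * t ^ (1 + β) ≤ (b ^ 2 + t ^ 2) ^ (p / 2) := by
      have h1a : b ^ ((n : ℝ) + 1) ≤ (b ^ 2 + t ^ 2) ^ (((n : ℝ) + 1) / 2) := by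
        calc b ^ ((n : ℝ) + 1) = (b ^ 2) ^ (((n : ℝ) + 1) / 2) := by
              rw [sq_rpow b hb0]; ring_nf
          _ ≤ (b ^ 2 + t ^ 2) ^ (((n : ℝ) + 1) / 2) :=
              Real.rpow_le_rpow (by positivity) (by nlinarith) (by positivity)
      have h1b : t ^ (1 + β) ≤ (b ^ 2 + t ^ 2) ^ ((1 + β) / 2) := by
        calc t ^ (1 + β) = (t ^ 2) ^ ((1 + β) / 2) := by
              rw [sq_rpow t ht0]; ring_nf
          _ ≤ (b ^ 2 + t ^ 2) ^ ((1 + β) / 2) :=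
              Real.rpow_le_rpow (by positivity) (by nlinarith) (by positivity)
      calc b ^ ((n : ℝ) + 1) * t ^ (1 + β)
          ≤ (b ^ 2 + t ^ 2) ^ (((n : ℝ) + 1) / 2) * (b ^ 2 + t ^ 2) ^ ((1 + β) / 2) := by
            gcongr
        _ = (b ^ 2 + t ^ 2) ^ (p / 2) := by
            rw [← Real.rpow_add (by positivity)]
            congr 1; rw [hp]; ring
    have hinv := inv_anti₀ hMpos hA
    rwa [← Real.rpow_neg (by positivity : (0:ℝ) ≤ b ^ 2 + t ^ 2), neg_div' , mul_inv,
      ← Real.rpow_neg hb0.le, ← Real.rpow_neg ht0.le] at hinv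
  -- second pair: c * (c²+t²)^(-p/2) ≤ t^(1-p)
  have h2 : c * (c ^ 2 + t ^ 2) ^ (-p / 2) ≤ t ^ (1 - p) := by
    have hcle : c ≤ (c ^ 2 + t ^ 2) ^ ((1:ℝ) / 2) := by
      rcases eq_or_lt_of_le hc with h | h
      · calc c = 0 := h.symm
          _ ≤ _ := Real.rpow_nonneg (by positivity) _
      · calc c = (c ^ 2) ^ ((1:ℝ) / 2) := by rw [sq_rpow c h]; norm_num
          _ ≤ (c ^ 2 + t ^ 2) ^ ((1:ℝ) / 2) :=
            Real.rpow_le_rpow (by positivity) (by nlinarith) (by norm_num)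
    calc c * (c ^ 2 + t ^ 2) ^ (-p / 2)
        ≤ (c ^ 2 + t ^ 2) ^ ((1:ℝ) / 2) * (c ^ 2 + t ^ 2) ^ (-p / 2) := by
          gcongr
      _ = (c ^ 2 + t ^ 2) ^ ((1 - p) / 2) := by
          rw [← Real.rpow_add (by positivity)]; congr 1; ring
      _ ≤ (t ^ 2) ^ ((1 - p) / 2) := by
          apply Real.rpow_le_rpow_of_nonpos (by positivity) (by nlinarith)
          have : (1:ℝ) < p := by rw [hp]; push_cast; nlinarith [Nat.cast_nonneg (α := ℝ) n]
          linarith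
      _ = t ^ (1 - p) := by rw [sq_rpow t ht0]; congr 1; ring
  calc t ^ (1 + 2 * β) * (b ^ 2 + t ^ 2) ^ (-p / 2) * c * (c ^ 2 + t ^ 2) ^ (-p / 2)
      = t ^ (1 + 2 * β) * (b ^ 2 + t ^ 2) ^ (-p / 2) * (c * (c ^ 2 + t ^ 2) ^ (-p / 2)) := by
        ring
    _ ≤ t ^ (1 + 2 * β) * (b ^ (-((n : ℝ) + 1)) * t ^ (-(1 + β))) * t ^ (1 - p) := by
        gcongr
    _ = b ^ (-((n : ℝ) + 1)) * t ^ (-((n : ℝ) + 1)) := by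
        have e1 : t ^ (1 + 2 * β) * t ^ (-(1 + β)) * t ^ (1 - p) = t ^ (-((n : ℝ) + 1)) := by
          rw [← Real.rpow_add ht0, ← Real.rpow_add ht0]
          congr 1; rw [hp]; ring
        calc t ^ (1 + 2 * β) * (b ^ (-((n : ℝ) + 1)) * t ^ (-(1 + β))) * t ^ (1 - p)
            = b ^ (-((n : ℝ) + 1)) * (t ^ (1 + 2 * β) * t ^ (-(1 + β)) * t ^ (1 - p)) := by ring
          _ = _ := by rw [e1]


theorem stmt_14 (n : ℕ) (hn : 1 ≤ n) (β : ℝ) (hβ0 : 0 < β)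
    (x' : EuclideanSpace ℝ (Fin n)) (hx' : ‖x'‖ = 1) :
    Continuous (fun z : EuclideanSpace ℝ (Fin n) =>
      ∫ t in Set.Ioi (1 : ℝ),
        t ^ (1 + 2 * β) * (‖z‖ ^ 2 + t ^ 2) ^ (-((n : ℝ) + 2 + β) / 2) *
          ‖x' - z‖ * (‖x' - z‖ ^ 2 + t ^ 2) ^ (-((n : ℝ) + 2 + β) / 2)) ∧
    Integrable (fun z : EuclideanSpace ℝ (Fin n) =>
      ∫ t in Set.Ioi (1 : ℝ),
        t ^ (1 + 2 * β) * (‖z‖ ^ 2 + t ^ 2) ^ (-((n : ℝ) + 2 + β) / 2) *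
          ‖x' - z‖ * (‖x' - z‖ ^ 2 + t ^ 2) ^ (-((n : ℝ) + 2 + β) / 2)) := by
  let E := EuclideanSpace ℝ (Fin n)
  set F : E → ℝ → ℝ := fun z t =>
    t ^ (1 + 2 * β) * (‖z‖ ^ 2 + t ^ 2) ^ (-((n : ℝ) + 2 + β) / 2) *
      ‖x' - z‖ * (‖x' - z‖ ^ 2 + t ^ 2) ^ (-((n : ℝ) + 2 + β) / 2) with hF
  suffices hsuff : (Continuous fun z : E => ∫ t in Set.Ioi (1:ℝ), F z t) ∧
      Integrable (fun z : E => ∫ t in Set.Ioi (1:ℝ), F z t) by exact hsuff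
  have hn1 : (1:ℝ) ≤ (n:ℝ) := by exact_mod_cast hn
  have hexp1 : -(2 * (n:ℝ) + 3) < -1 := by linarith
  have hexp2 : -((n:ℝ) + 1) < -1 := by linarith
  have hint1 : IntegrableOn (fun t : ℝ => t ^ (-(2 * (n:ℝ) + 3))) (Set.Ioi 1) :=
    integrableOn_Ioi_rpow_of_lt hexp1 one_pos
  have hint2 : IntegrableOn (fun t : ℝ => t ^ (-((n:ℝ) + 1))) (Set.Ioi 1) :=
    integrableOn_Ioi_rpow_of_lt hexp2 one_pos
  -- nonnegativity
  have hnn : ∀ z : E, ∀ t ∈ Set.Ioi (1:ℝ), 0 ≤ F z t := by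
    intro z t ht
    have ht0 : (0:ℝ) < t := lt_trans one_pos ht
    rw [hF]
    positivity
  -- key pointwise bounds
  have key1 : ∀ z : E, ∀ t ∈ Set.Ioi (1:ℝ),
      F z t ≤ ‖x' - z‖ * t ^ (-(2 * (n:ℝ) + 3)) := fun z t ht =>
    aux_bound1 n β ‖z‖ ‖x' - z‖ t hβ0 (norm_nonneg _) (norm_nonneg _) (le_of_lt ht)
  have key2 : ∀ z : E, 1 ≤ ‖z‖ → ∀ t ∈ Set.Ioi (1:ℝ),
      F z t ≤ ‖z‖ ^ (-((n:ℝ) + 1)) * t ^ (-((n:ℝ) + 1)) := fun z hz t ht =>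
    aux_bound2 n β ‖z‖ ‖x' - z‖ t hβ0 hz (norm_nonneg _) (le_of_lt ht)
  -- measurability in t
  have hmeas : ∀ z : E, AEStronglyMeasurable (F z) (volume.restrict (Set.Ioi 1)) := by
    intro z
    apply ContinuousOn.aestronglyMeasurable ?_ measurableSet_Ioi
    intro t ht
    apply ContinuousWithinAt.mono_of_mem_nhdsWithin ?_ (mem_nhdsWithin_of_mem_nhds (Ioi_mem_nhds ht))
    have ht0 : (0:ℝ) < t := lt_trans one_pos ht
    apply ContinuousAt.continuousWithinAt
    have h1 : ContinuousAt (fun t : ℝ => t ^ (1 + 2 * β)) t :=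
      Real.continuousAt_rpow_const t _ (Or.inl ht0.ne')
    have h2 : ContinuousAt (fun t : ℝ => (‖z‖ ^ 2 + t ^ 2) ^ (-((n:ℝ) + 2 + β) / 2)) t :=
      ContinuousAt.rpow_const (by fun_prop) (Or.inl (by positivity))
    have h3 : ContinuousAt (fun t : ℝ => (‖x' - z‖ ^ 2 + t ^ 2) ^ (-((n:ℝ) + 2 + β) / 2)) t :=
      ContinuousAt.rpow_const (by fun_prop) (Or.inl (by positivity))
    exact ((h1.mul h2).mul continuousAt_const).mul h3
  -- integrability in t
  have hFint : ∀ z : E, IntegrableOn (F z) (Set.Ioi 1) := by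
    intro z
    apply Integrable.mono' (hint1.const_mul ‖x' - z‖) (hmeas z)
    apply (ae_restrict_iff' measurableSet_Ioi).mpr (ae_of_all _ fun t ht => ?_)
    rw [Real.norm_of_nonneg (hnn z t ht)]
    exact key1 z t ht
  -- continuity
  have hcont : Continuous fun z : E => ∫ t in Set.Ioi (1:ℝ), F z t := by
    rw [continuous_iff_continuousAt]
    intro z₀
    apply continuousAt_of_dominated (bound := fun t => (‖x' - z₀‖ + 1) * t ^ (-(2 * (n:ℝ) + 3)))
    · exact Filter.Eventually.of_forall hmeas
    · filter_upwards [Metric.ball_mem_nhds z₀ one_pos] with z hz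
      apply (ae_restrict_iff' measurableSet_Ioi).mpr (ae_of_all _ fun t ht => ?_)
      rw [Real.norm_of_nonneg (hnn z t ht)]
      have hz1 : ‖x' - z‖ ≤ ‖x' - z₀‖ + 1 := by
        have : ‖x' - z‖ ≤ ‖x' - z₀‖ + ‖z₀ - z‖ := by
          calc ‖x' - z‖ = ‖(x' - z₀) + (z₀ - z)‖ := by rw [sub_add_sub_cancel]
            _ ≤ _ := norm_add_le _ _
        have hd : ‖z₀ - z‖ < 1 := by
          rw [← dist_eq_norm, dist_comm]
          exact Metric.mem_ball.mp hz
        linarith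
      calc F z t ≤ ‖x' - z‖ * t ^ (-(2 * (n:ℝ) + 3)) := key1 z t ht
        _ ≤ (‖x' - z₀‖ + 1) * t ^ (-(2 * (n:ℝ) + 3)) := by
            have ht0 : (0:ℝ) < t := lt_trans one_pos ht
            gcongr
    · exact hint1.const_mul _
    · apply (ae_restrict_iff' measurableSet_Ioi).mpr (ae_of_all _ fun t ht => ?_)
      have ht0 : (0:ℝ) < t := lt_trans one_pos ht
      have h2 : ContinuousAt (fun z : E => (‖z‖ ^ 2 + t ^ 2) ^ (-((n:ℝ) + 2 + β) / 2)) z₀ :=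
        ContinuousAt.rpow_const (by fun_prop) (Or.inl (by positivity))
      have h3 : ContinuousAt
          (fun z : E => (‖x' - z‖ ^ 2 + t ^ 2) ^ (-((n:ℝ) + 2 + β) / 2)) z₀ :=
        ContinuousAt.rpow_const (by fun_prop) (Or.inl (by positivity))
      have h4 : ContinuousAt (fun z : E => ‖x' - z‖) z₀ := by fun_prop
      exact ((continuousAt_const.mul h2).mul h4).mul h3
  refine ⟨hcont, ?_⟩
  -- integral values
  have hval1 : ∫ t in Set.Ioi (1:ℝ), t ^ (-(2 * (n:ℝ) + 3)) = 1 / (2 * (n:ℝ) + 2) := by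
    rw [integral_Ioi_rpow_of_lt hexp1 one_pos, Real.one_rpow,
      show -(2 * (n:ℝ) + 3) + 1 = -(2 * (n:ℝ) + 2) by ring, div_neg, neg_div, neg_neg]
  have hval2 : ∫ t in Set.Ioi (1:ℝ), t ^ (-((n:ℝ) + 1)) = 1 / (n:ℝ) := by
    rw [integral_Ioi_rpow_of_lt hexp2 one_pos, Real.one_rpow,
      show -((n:ℝ) + 1) + 1 = -(n:ℝ) by ring, div_neg, neg_div, neg_neg]
  have hGnn : ∀ z : E, 0 ≤ ∫ t in Set.Ioi (1:ℝ), F z t := fun z =>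
    setIntegral_nonneg measurableSet_Ioi (hnn z)
  have hbound : ∀ z : E, (∫ t in Set.Ioi (1:ℝ), F z t) ≤
      (2:ℝ) ^ ((n:ℝ) + 1) * (1 + ‖z‖) ^ (-((n:ℝ) + 1)) := by
    intro z
    have h2pos : (0:ℝ) < (2:ℝ) ^ ((n:ℝ) + 1) := by positivity
    rcases le_or_gt ‖z‖ 1 with h | h
    · -- small z : integral ≤ 1 ≤ RHS
      have hub : (∫ t in Set.Ioi (1:ℝ), F z t) ≤
          ∫ t in Set.Ioi (1:ℝ), ‖x' - z‖ * t ^ (-(2 * (n:ℝ) + 3)) :=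
        setIntegral_mono_on (hFint z) (hint1.const_mul _) measurableSet_Ioi (key1 z)
      rw [integral_const_mul, hval1] at hub
      have hxz : ‖x' - z‖ ≤ 2 := by
        calc ‖x' - z‖ ≤ ‖x'‖ + ‖z‖ := norm_sub_le _ _
          _ ≤ 2 := by rw [hx']; linarith
      have hG1 : (∫ t in Set.Ioi (1:ℝ), F z t) ≤ 1 := by
        have : ‖x' - z‖ * (1 / (2 * (n:ℝ) + 2)) ≤ 2 * (1 / (2 * (n:ℝ) + 2)) := by
          gcongr
        have h2 : 2 * (1 / (2 * (n:ℝ) + 2)) ≤ 1 := by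
          rw [mul_one_div, div_le_one (by linarith)]
          linarith
        linarith
      have hRHS : (1:ℝ) ≤ (2:ℝ) ^ ((n:ℝ) + 1) * (1 + ‖z‖) ^ (-((n:ℝ) + 1)) := by
        have hg : (2:ℝ) ^ (-((n:ℝ) + 1)) ≤ (1 + ‖z‖) ^ (-((n:ℝ) + 1)) :=
          Real.rpow_le_rpow_of_nonpos (by positivity) (by linarith) (by linarith)
        calc (1:ℝ) = (2:ℝ) ^ ((n:ℝ) + 1) * (2:ℝ) ^ (-((n:ℝ) + 1)) := by
              rw [← Real.rpow_add (by norm_num : (0:ℝ) < 2),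
                show (n:ℝ) + 1 + -((n:ℝ) + 1) = 0 by ring, Real.rpow_zero]
          _ ≤ _ := by gcongr
      linarith
    · -- large z
      have hub : (∫ t in Set.Ioi (1:ℝ), F z t) ≤
          ∫ t in Set.Ioi (1:ℝ), ‖z‖ ^ (-((n:ℝ) + 1)) * t ^ (-((n:ℝ) + 1)) :=
        setIntegral_mono_on (hFint z) (hint2.const_mul _) measurableSet_Ioi (key2 z h.le)
      rw [integral_const_mul, hval2] at hub
      have hz0 : (0:ℝ) < ‖z‖ := lt_trans one_pos h
      have hG1 : (∫ t in Set.Ioi (1:ℝ), F z t) ≤ ‖z‖ ^ (-((n:ℝ) + 1)) := by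
        have : ‖z‖ ^ (-((n:ℝ) + 1)) * (1 / (n:ℝ)) ≤ ‖z‖ ^ (-((n:ℝ) + 1)) * 1 := by
          gcongr
          · rw [div_le_one (by linarith)]; linarith
        rw [mul_one] at this
        linarith
      have hRHS : ‖z‖ ^ (-((n:ℝ) + 1)) ≤ (2:ℝ) ^ ((n:ℝ) + 1) * (1 + ‖z‖) ^ (-((n:ℝ) + 1)) := by
        have hg : (2 * ‖z‖) ^ (-((n:ℝ) + 1)) ≤ (1 + ‖z‖) ^ (-((n:ℝ) + 1)) :=
          Real.rpow_le_rpow_of_nonpos (by positivity) (by linarith) (by linarith)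
        have hsplit : (2 * ‖z‖) ^ (-((n:ℝ) + 1)) =
            (2:ℝ) ^ (-((n:ℝ) + 1)) * ‖z‖ ^ (-((n:ℝ) + 1)) :=
          Real.mul_rpow (by norm_num) hz0.le
        have h2eq : (2:ℝ) ^ ((n:ℝ) + 1) * (2:ℝ) ^ (-((n:ℝ) + 1)) = 1 := by
          rw [← Real.rpow_add (by norm_num : (0:ℝ) < 2),
            show (n:ℝ) + 1 + -((n:ℝ) + 1) = 0 by ring, Real.rpow_zero]
        calc ‖z‖ ^ (-((n:ℝ) + 1))
            = (2:ℝ) ^ ((n:ℝ) + 1) * ((2:ℝ) ^ (-((n:ℝ) + 1)) * ‖z‖ ^ (-((n:ℝ) + 1))) := by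
              rw [← mul_assoc, h2eq, one_mul]
          _ = (2:ℝ) ^ ((n:ℝ) + 1) * (2 * ‖z‖) ^ (-((n:ℝ) + 1)) := by rw [hsplit]
          _ ≤ _ := by gcongr
      linarith
  have hdim : (Module.finrank ℝ E : ℝ) < (n:ℝ) + 1 := by
    rw [show Module.finrank ℝ E = n from finrank_euclideanSpace_fin]
    linarith
  apply Integrable.mono' ((integrable_one_add_norm hdim).const_mul ((2:ℝ) ^ ((n:ℝ) + 1)))
    hcont.aestronglyMeasurable
  apply ae_of_all _ fun z => ?_
  rw [Real.norm_of_nonneg (hGnn z)]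
  exact hbound z
end
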